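/- For all x ∈ ℝ and ρ > 0, the partial derivative of H with respect to ρ satisfies |∂H/∂ρ (x, ρ)| ≤ (2/ρ) · min(1/ρ², π/(2ρ)), where H(x, ρ) = (1/π) ∫₀^π cos(x(θ + sin θ))/(ρ² + sin²θ) dθ. -/

import Mathlib

open Real intervalIntegral MeasureTheory

set_option maxHeartbeats 1000000 in
theorem good_H_deriv_rho_bound (x ρ : ℝ) (hρ : 0 < ρ) :
    |deriv (fun r : ℝ =>
        (1 / π) * ∫ θ in (0:ℝ)..π, Real.cos (x * (θ + Real.sin θ)) / (r ^ 2 + Real.sin θ ^ 2)) ρ| ≤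
      (2 / ρ) * min (1 / ρ ^ 2) (π / (2 * ρ)) := by
  have hπ : (0:ℝ) < π := Real.pi_pos
  set F : ℝ → ℝ → ℝ := fun r θ => Real.cos (x * (θ + Real.sin θ)) / (r ^ 2 + Real.sin θ ^ 2)
    with hF
  set F' : ℝ → ℝ → ℝ := fun r θ =>
    -(Real.cos (x * (θ + Real.sin θ)) * (2 * r)) / (r ^ 2 + Real.sin θ ^ 2) ^ 2 with hF'
  have hden : ∀ r : ℝ, ρ / 2 < r → ∀ θ : ℝ, 0 < r ^ 2 + Real.sin θ ^ 2 := by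
    intro r hr θ
    nlinarith [sq_nonneg (Real.sin θ)]
  have hdρ : ∀ θ : ℝ, 0 < ρ ^ 2 + Real.sin θ ^ 2 := hden ρ (by linarith)
  have hcontF : ∀ r : ℝ, ρ / 2 < r → Continuous (F r) := by
    intro r hr
    apply Continuous.div
    · fun_prop
    · fun_prop
    · intro θ; exact (hden r hr θ).ne'
  have hcontF' : Continuous (F' ρ) := by
    apply Continuous.div
    · fun_prop
    · fun_prop
    · intro θ; exact (pow_pos (hdρ θ) 2).ne'
  have hball : ∀ r ∈ Metric.ball ρ (ρ / 2), ρ / 2 < r ∧ r < 3 * ρ / 2 := by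
    intro r hr
    rw [Metric.mem_ball, Real.dist_eq, abs_lt] at hr
    constructor <;> linarith [hr.1, hr.2]
  have hdiff : ∀ θ : ℝ, ∀ r : ℝ, ρ / 2 < r → HasDerivAt (fun r => F r θ) (F' r θ) r := by
    intro θ r hr
    have h1 : HasDerivAt (fun r : ℝ => r ^ 2 + Real.sin θ ^ 2) (2 * r) r := by
      simpa using (hasDerivAt_pow 2 r).add_const (Real.sin θ ^ 2)
    have h2 := (hasDerivAt_const r (Real.cos (x * (θ + Real.sin θ)))).div h1 (hden r hr θ).ne'
    convert h2 using 1
    · rfl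
    · rfl
    · rfl
    · show -(Real.cos (x * (θ + Real.sin θ)) * (2 * r)) / (r ^ 2 + Real.sin θ ^ 2) ^ 2 = _
      ring
  -- differentiation under the integral sign
  have hεpos : (0:ℝ) < ρ / 2 := by linarith
  have hF_meas : ∀ᶠ r in nhds ρ, AEStronglyMeasurable (F r) (volume.restrict (Set.uIoc 0 π)) := by
    filter_upwards [Metric.ball_mem_nhds ρ hεpos] with r hr
    exact ((hcontF r (hball r hr).1)).aestronglyMeasurable
  have hF_int : IntervalIntegrable (F ρ) volume 0 π :=
    (hcontF ρ (by linarith)).intervalIntegrable 0 π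
  have hF'_meas : AEStronglyMeasurable (F' ρ) (volume.restrict (Set.uIoc 0 π)) :=
    hcontF'.aestronglyMeasurable
  have h_bound : ∀ᵐ θ ∂volume, θ ∈ Set.uIoc 0 π → ∀ r ∈ Metric.ball ρ (ρ / 2),
      ‖F' r θ‖ ≤ 48 / ρ ^ 3 := by
    refine Filter.Eventually.of_forall fun θ _ r hr => ?_
    obtain ⟨hr1, hr2⟩ := hball r hr
    have hd := hden r hr1 θ
    have hq : ρ ^ 2 / 4 ≤ r ^ 2 + Real.sin θ ^ 2 := by
      nlinarith [sq_nonneg (Real.sin θ)]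
    have hd4 : ρ ^ 4 / 16 ≤ (r ^ 2 + Real.sin θ ^ 2) ^ 2 := by nlinarith
    have hrpos : 0 < r := lt_trans (by linarith) hr1
    have hnum : |Real.cos (x * (θ + Real.sin θ)) * (2 * r)| ≤ 2 * r := by
      rw [abs_mul]
      calc |Real.cos (x * (θ + Real.sin θ))| * |2 * r| ≤ 1 * |2 * r| := by
            apply mul_le_mul_of_nonneg_right (Real.abs_cos_le_one _) (abs_nonneg _)
        _ = 2 * r := by rw [one_mul, abs_of_pos (by linarith)]
    rw [Real.norm_eq_abs, hF', abs_div, abs_neg, abs_of_pos (pow_pos hd 2)]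
    calc |Real.cos (x * (θ + Real.sin θ)) * (2 * r)| / (r ^ 2 + Real.sin θ ^ 2) ^ 2
        ≤ (2 * r) / (ρ ^ 4 / 16) := by
          apply div_le_div₀ (by linarith) hnum (by positivity) hd4
      _ ≤ (3 * ρ) / (ρ ^ 4 / 16) := by
          apply div_le_div_of_nonneg_right (by linarith) (by positivity)
      _ = 48 / ρ ^ 3 := by field_simp; ring
  have bound_int : IntervalIntegrable (fun _ : ℝ => 48 / ρ ^ 3) volume 0 π :=
    intervalIntegrable_const
  have h_diff : ∀ᵐ θ ∂volume, θ ∈ Set.uIoc 0 π → ∀ r ∈ Metric.ball ρ (ρ / 2),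
      HasDerivAt (fun r => F r θ) (F' r θ) r :=
    Filter.Eventually.of_forall fun θ _ r hr => hdiff θ r (hball r hr).1
  obtain ⟨hF'_int, hderiv⟩ :=
    intervalIntegral.hasDerivAt_integral_of_dominated_loc_of_deriv_le (𝕜 := ℝ)
      (Metric.ball_mem_nhds ρ hεpos) hF_meas hF_int hF'_meas h_bound bound_int h_diff
  have hD : deriv (fun r : ℝ =>
      (1 / π) * ∫ θ in (0:ℝ)..π, Real.cos (x * (θ + Real.sin θ)) / (r ^ 2 + Real.sin θ ^ 2)) ρ
      = (1 / π) * ∫ θ in (0:ℝ)..π, F' ρ θ := (hderiv.const_mul (1 / π)).deriv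
  rw [hD]
  set J := ∫ θ in (0:ℝ)..π, F' ρ θ with hJ
  set g : ℝ → ℝ := fun θ => 2 * ρ / (ρ ^ 2 + Real.sin θ ^ 2) ^ 2 with hg
  have hg_cont : Continuous g := by
    apply Continuous.div continuous_const (by fun_prop)
    intro θ; exact (pow_pos (hdρ θ) 2).ne'
  have hg_int : IntervalIntegrable g volume 0 π := hg_cont.intervalIntegrable 0 π
  have hg_nonneg : ∀ θ, 0 ≤ g θ := fun θ => by
    have := hdρ θ; positivity
  -- |J| ≤ ∫ g
  have habs : |J| ≤ ∫ θ in (0:ℝ)..π, g θ := by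
    rw [← Real.norm_eq_abs]
    refine (intervalIntegral.norm_integral_le_of_norm_le hπ.le ?_ hg_int).trans_eq ?_
    · refine Filter.Eventually.of_forall fun θ _ => ?_
      have hd := hdρ θ
      rw [Real.norm_eq_abs, hF', abs_div, abs_neg, abs_of_pos (pow_pos hd 2), hg]
      refine div_le_div_of_nonneg_right ?_ (by positivity)
      rw [abs_mul, abs_of_pos (by linarith : (0:ℝ) < 2 * ρ)]
      calc |Real.cos (x * (θ + Real.sin θ))| * (2 * ρ) ≤ 1 * (2 * ρ) := by
            apply mul_le_mul_of_nonneg_right (Real.abs_cos_le_one _) (by linarith)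
        _ = 2 * ρ := one_mul _
    · rfl
  -- Bound 1 : ∫ g ≤ π * (2 / ρ^3)
  have hbound1 : (∫ θ in (0:ℝ)..π, g θ) ≤ π * (2 / ρ ^ 3) := by
    have hmono : ∀ θ ∈ Set.Icc (0:ℝ) π, g θ ≤ 2 / ρ ^ 3 := by
      intro θ _
      have hd := hdρ θ
      rw [hg, div_le_div_iff₀ (pow_pos hd 2) (by positivity)]
      nlinarith [sq_nonneg (Real.sin θ), sq_nonneg (Real.sin θ ^ 2), pow_pos hρ 2,
        mul_nonneg (sq_nonneg ρ) (sq_nonneg (Real.sin θ))]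
    calc (∫ θ in (0:ℝ)..π, g θ) ≤ ∫ _ in (0:ℝ)..π, 2 / ρ ^ 3 :=
          intervalIntegral.integral_mono_on hπ.le hg_int intervalIntegrable_const hmono
      _ = π * (2 / ρ ^ 3) := by simp [mul_div_assoc]
  -- Bound 2 : ∫ g ≤ π^2 / ρ^2, via comparison with arctan antiderivative
  set h : ℝ → ℝ := fun θ => 1 / (ρ ^ 2 + 4 / π ^ 2 * θ ^ 2) + 1 / (ρ ^ 2 + 4 / π ^ 2 * (π - θ) ^ 2)
    with hh
  have hpos1 : ∀ θ : ℝ, 0 < ρ ^ 2 + 4 / π ^ 2 * θ ^ 2 := by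
    intro θ
    have h4 : (0:ℝ) ≤ 4 / π ^ 2 := by positivity
    have := mul_nonneg h4 (sq_nonneg θ)
    nlinarith [pow_pos hρ 2]
  have hh_cont : Continuous h := by
    apply Continuous.add
    · apply Continuous.div continuous_const (by fun_prop)
      intro θ; exact (hpos1 θ).ne'
    · apply Continuous.div continuous_const (by fun_prop)
      intro θ; exact (hpos1 (π - θ)).ne'
  have hh_int : IntervalIntegrable h volume 0 π := hh_cont.intervalIntegrable 0 π
  have hΦ : ∀ θ : ℝ, HasDerivAt
      (fun θ : ℝ => π / (2 * ρ) *
        (Real.arctan (2 / (π * ρ) * θ) - Real.arctan (2 / (π * ρ) * (π - θ)))) (h θ) θ := by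
    intro θ
    have h1 : HasDerivAt (fun θ : ℝ => 2 / (π * ρ) * θ) (2 / (π * ρ)) θ := by
      simpa using (hasDerivAt_id θ).const_mul (2 / (π * ρ))
    have h2 : HasDerivAt (fun θ : ℝ => 2 / (π * ρ) * (π - θ)) (2 / (π * ρ) * (-1)) θ := by
      exact ((hasDerivAt_id θ).const_sub π).const_mul (2 / (π * ρ))
    have h3 := (h1.arctan.sub h2.arctan).const_mul (π / (2 * ρ))
    convert h3 using 1
    · rfl
    · rfl
    · rfl
    rw [hh]
    have e1 : 0 < 1 + (2 / (π * ρ) * θ) ^ 2 := by positivity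
    have e2 : 0 < 1 + (2 / (π * ρ) * (π - θ)) ^ 2 := by positivity
    field_simp
    ring
  have hint_h : (∫ θ in (0:ℝ)..π, h θ) ≤ π ^ 2 / (2 * ρ) := by
    rw [intervalIntegral.integral_eq_sub_of_hasDerivAt (fun θ _ => hΦ θ) hh_int]
    have : Real.arctan (2 / (π * ρ) * π) < π / 2 := Real.arctan_lt_pi_div_two _
    have h0 : Real.arctan (2 / (π * ρ) * (π - π)) = 0 := by simp
    have h0' : Real.arctan (2 / (π * ρ) * 0) = 0 := by simp
    rw [h0, h0']
    have harct : 0 ≤ Real.arctan (2 / (π * ρ) * π) := by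
      rw [← Real.arctan_zero]
      exact Real.arctan_strictMono.monotone (by positivity)
    have hA : (π:ℝ) - 0 = π := sub_zero π
    rw [hA]
    have key : π / (2 * ρ) * (Real.arctan (2 / (π * ρ) * π) - 0) -
        π / (2 * ρ) * (0 - Real.arctan (2 / (π * ρ) * π)) =
        π * Real.arctan (2 / (π * ρ) * π) / ρ := by field_simp; ring
    rw [key, div_le_div_iff₀ hρ (by positivity)]
    nlinarith [mul_le_mul_of_nonneg_right this.le (by positivity : (0:ℝ) ≤ 2 * ρ * π), hπ, hρ, harct]
  -- pointwise : g ≤ (2/ρ) * h on [0, π]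
  have hgh : ∀ θ ∈ Set.Icc (0:ℝ) π, g θ ≤ 2 / ρ * h θ := by
    intro θ hθ
    have hd := hdρ θ
    have hsin : 4 / π ^ 2 * θ ^ 2 ≤ Real.sin θ ^ 2 ∨
        4 / π ^ 2 * (π - θ) ^ 2 ≤ Real.sin θ ^ 2 := by
      rcases le_or_gt θ (π / 2) with hc | hc
      · left
        have := Real.mul_le_sin hθ.1 hc
        have h2 : (2 / π * θ) ^ 2 ≤ Real.sin θ ^ 2 :=
          pow_le_pow_left₀ (mul_nonneg (by positivity) hθ.1) this 2
        calc 4 / π ^ 2 * θ ^ 2 = (2 / π * θ) ^ 2 := by ring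
          _ ≤ _ := h2
      · right
        have hb1 : (0:ℝ) ≤ π - θ := by linarith [hθ.2]
        have hb2 : π - θ ≤ π / 2 := by linarith
        have := Real.mul_le_sin hb1 hb2
        rw [Real.sin_pi_sub] at this
        have h2 : (2 / π * (π - θ)) ^ 2 ≤ Real.sin θ ^ 2 :=
          pow_le_pow_left₀ (mul_nonneg (by positivity) hb1) this 2
        calc 4 / π ^ 2 * (π - θ) ^ 2 = (2 / π * (π - θ)) ^ 2 := by ring
          _ ≤ _ := h2
    have hstep1 : g θ ≤ 2 / ρ * (1 / (ρ ^ 2 + Real.sin θ ^ 2)) := by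
      rw [hg, div_mul_div_comm, div_le_div_iff₀ (pow_pos hd 2) (by positivity)]
      nlinarith [sq_nonneg (Real.sin θ), sq_nonneg (Real.sin θ ^ 2),
        mul_nonneg (sq_nonneg ρ) (sq_nonneg (Real.sin θ))]
    refine hstep1.trans (mul_le_mul_of_nonneg_left ?_ (by positivity))
    rcases hsin with hs | hs
    · calc 1 / (ρ ^ 2 + Real.sin θ ^ 2) ≤ 1 / (ρ ^ 2 + 4 / π ^ 2 * θ ^ 2) :=
            one_div_le_one_div_of_le (hpos1 θ) (by linarith)
        _ ≤ h θ := le_add_of_nonneg_right (one_div_nonneg.mpr (hpos1 (π - θ)).le)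
    · calc 1 / (ρ ^ 2 + Real.sin θ ^ 2) ≤ 1 / (ρ ^ 2 + 4 / π ^ 2 * (π - θ) ^ 2) :=
            one_div_le_one_div_of_le (hpos1 (π - θ)) (by linarith)
        _ ≤ h θ := le_add_of_nonneg_left (one_div_nonneg.mpr (hpos1 θ).le)
  have hbound2 : (∫ θ in (0:ℝ)..π, g θ) ≤ π ^ 2 / ρ ^ 2 := by
    calc (∫ θ in (0:ℝ)..π, g θ) ≤ ∫ θ in (0:ℝ)..π, 2 / ρ * h θ :=
          intervalIntegral.integral_mono_on hπ.le hg_int (hh_int.const_mul _) hgh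
      _ = 2 / ρ * ∫ θ in (0:ℝ)..π, h θ := intervalIntegral.integral_const_mul _ _
      _ ≤ 2 / ρ * (π ^ 2 / (2 * ρ)) := mul_le_mul_of_nonneg_left hint_h (by positivity)
      _ = π ^ 2 / ρ ^ 2 := by field_simp
  have habs' : |1 / π * J| = 1 / π * |J| := by
    rw [abs_mul, abs_of_pos (by positivity : (0:ℝ) < 1 / π)]
  rw [habs']
  have hmin : 2 / ρ * min (1 / ρ ^ 2) (π / (2 * ρ)) = min (2 / ρ ^ 3) (π / ρ ^ 2) := by
    rw [mul_min_of_nonneg _ _ (by positivity : (0:ℝ) ≤ 2 / ρ)]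
    congr 1
    · field_simp
    · field_simp
  rw [hmin]
  refine le_min ?_ ?_
  · calc 1 / π * |J| ≤ 1 / π * (π * (2 / ρ ^ 3)) :=
          mul_le_mul_of_nonneg_left (habs.trans hbound1) (by positivity)
      _ = 2 / ρ ^ 3 := by field_simp
  · calc 1 / π * |J| ≤ 1 / π * (π ^ 2 / ρ ^ 2) :=
          mul_le_mul_of_nonneg_left (habs.trans hbound2) (by positivity)
      _ = π / ρ ^ 2 := by field_simp
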